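/- For every θ ∉ {nπ/3 : n ∈ ℤ} and b > 0, the matrix ϱ_{b,θ} has rank exactly 5 (equivalently, its kernel is exactly 4-dimensional, spanned by w₁, w₂, w₃ and the appropriate vector w₋, w₀, or w₊). -/

import Mathlib

open Matrix Complex

noncomputable def pTheta (θ : ℝ) : ℝ :=
  max (max (2 * Real.cos (θ - 2 * Real.pi / 3)) (2 * Real.cos θ))
    (2 * Real.cos (θ + 2 * Real.pi / 3))

lemma cube_lemma (x : ℝ) : (2*Real.cos x)^3 - 3*(2*Real.cos x) = 2*Real.cos (3*x) := by
  rw [Real.cos_three_mul]; ring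

lemma pTheta_cube (θ : ℝ) : (pTheta θ)^3 - 3*(pTheta θ) = 2*Real.cos (3*θ) := by
  unfold pTheta
  rcases max_choice (max (2 * Real.cos (θ - 2 * Real.pi / 3)) (2 * Real.cos θ))
      (2 * Real.cos (θ + 2 * Real.pi / 3)) with h | h
  · rw [h]
    rcases max_choice (2 * Real.cos (θ - 2 * Real.pi / 3)) (2 * Real.cos θ) with h2 | h2
    · rw [h2, cube_lemma]
      have : 3 * (θ - 2 * Real.pi / 3) = 3*θ - (1:ℤ) * (2*Real.pi) := by push_cast; ring
      rw [this, Real.cos_sub_int_mul_two_pi]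
    · rw [h2, cube_lemma]
  · rw [h, cube_lemma]
    have : 3 * (θ + 2 * Real.pi / 3) = 3*θ + (1:ℤ) * (2*Real.pi) := by push_cast; ring
    rw [this, Real.cos_add_int_mul_two_pi]

lemma one_lt_pTheta (θ : ℝ) (hθ : ∀ n : ℤ, θ ≠ n * Real.pi / 3) : 1 < pTheta θ := by
  have hπ := Real.pi_pos
  set k : ℤ := round (θ * 3 / (2 * Real.pi)) with hk
  have hr := abs_sub_round (θ * 3 / (2 * Real.pi))
  rw [← hk] at hr
  set δ : ℝ := θ - 2 * Real.pi * k / 3 with hδ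
  have habs : |δ| ≤ Real.pi / 3 := by
    have h1 : |θ * 3 / (2 * Real.pi) - k| * (2 * Real.pi / 3) ≤ (1/2) * (2 * Real.pi / 3) := by
      apply mul_le_mul_of_nonneg_right hr (by positivity)
    have h2 : |θ * 3 / (2 * Real.pi) - k| * (2 * Real.pi / 3) = |δ| := by
      rw [← abs_of_pos (show (0:ℝ) < 2 * Real.pi / 3 by positivity), ← abs_mul]
      congr 1
      field_simp [hδ]
      rw [hδ]; ring
    rw [h2] at h1
    linarith
  have hne : |δ| ≠ Real.pi / 3 := by
    intro h
    rcases abs_eq (by positivity) |>.mp h with h' | h'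
    · exact hθ (2*k+1) (by push_cast; linarith [hδ]; )
    · exact hθ (2*k-1) (by push_cast; linarith [hδ])
  have hlt : |δ| < Real.pi / 3 := lt_of_le_of_ne habs hne
  have hcos : 1/2 < Real.cos δ := by
    rw [← Real.cos_abs]
    calc 1/2 = Real.cos (Real.pi / 3) := Real.cos_pi_div_three.symm
    _ < Real.cos |δ| := Real.cos_lt_cos_of_nonneg_of_le_pi (abs_nonneg _) (by linarith) hlt
  -- now cos δ appears as one of the three branches
  have hk3 : ∃ m r : ℤ, k = 3*m + r ∧ (r = 0 ∨ r = 1 ∨ r = 2) := by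
    refine ⟨k / 3, k % 3, by omega, by omega⟩
  obtain ⟨m, r, hkmr, hr012⟩ := hk3
  have key : Real.cos δ = Real.cos (θ - 2 * Real.pi * r / 3) := by
    have : δ = (θ - 2 * Real.pi * r / 3) - m * (2 * Real.pi) := by
      rw [hδ, hkmr]; push_cast; ring
    rw [this, Real.cos_sub_int_mul_two_pi]
  have hle : 2 * Real.cos δ ≤ pTheta θ := by
    rcases hr012 with rfl | rfl | rfl
    · rw [key]
      have : θ - 2 * Real.pi * (0:ℤ) / 3 = θ := by push_cast; ring
      rw [this]
      exact le_trans (le_max_right _ _) (le_max_left _ _)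
    · rw [key]
      have : θ - 2 * Real.pi * (1:ℤ) / 3 = θ - 2 * Real.pi / 3 := by push_cast; ring
      rw [this]
      exact le_trans (le_max_left _ _) (le_max_left _ _)
    · rw [key]
      have h2 : Real.cos (θ - 2 * Real.pi * (2:ℤ) / 3) = Real.cos (θ + 2 * Real.pi / 3) := by
        have : θ - 2 * Real.pi * (2:ℤ) / 3 = (θ + 2 * Real.pi / 3) - (1:ℤ) * (2 * Real.pi) := by
          push_cast; ring
        rw [this, Real.cos_sub_int_mul_two_pi]
      rw [h2]
      exact le_max_right _ _
  linarith


noncomputable def rho (b θ : ℝ) : Matrix (Fin 9) (Fin 9) ℂ :=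
  let p : ℂ := (pTheta θ : ℂ)
  let e : ℂ := Complex.exp (θ * Complex.I)
  let f : ℂ := Complex.exp (-θ * Complex.I)
  !![p, 0, 0, 0, -e, 0, 0, 0, -f;
     0, 1/(b:ℂ), 0, -f, 0, 0, 0, 0, 0;
     0, 0, (b:ℂ), 0, 0, 0, -e, 0, 0;
     0, -e, 0, (b:ℂ), 0, 0, 0, 0, 0;
     -f, 0, 0, 0, p, 0, 0, 0, -e;
     0, 0, 0, 0, 0, 1/(b:ℂ), 0, -f, 0;
     0, 0, -f, 0, 0, 0, 1/(b:ℂ), 0, 0;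
     0, 0, 0, 0, 0, -e, 0, (b:ℂ), 0;
     -e, 0, 0, 0, -f, 0, 0, 0, p]

lemma cw2_0 {α : Type*} (x : α) (u : Fin 1 → α) : Matrix.vecCons x u (0:Fin 2) = x := rfl
lemma cw2_1 {α : Type*} (x : α) (u : Fin 1 → α) : Matrix.vecCons x u (1:Fin 2) = u (0:Fin 1) := rfl
lemma cw3_0 {α : Type*} (x : α) (u : Fin 2 → α) : Matrix.vecCons x u (0:Fin 3) = x := rfl
lemma cw3_1 {α : Type*} (x : α) (u : Fin 2 → α) : Matrix.vecCons x u (1:Fin 3) = u (0:Fin 2) := rfl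
lemma cw3_2 {α : Type*} (x : α) (u : Fin 2 → α) : Matrix.vecCons x u (2:Fin 3) = u (1:Fin 2) := rfl
lemma cw4_0 {α : Type*} (x : α) (u : Fin 3 → α) : Matrix.vecCons x u (0:Fin 4) = x := rfl
lemma cw4_1 {α : Type*} (x : α) (u : Fin 3 → α) : Matrix.vecCons x u (1:Fin 4) = u (0:Fin 3) := rfl
lemma cw4_2 {α : Type*} (x : α) (u : Fin 3 → α) : Matrix.vecCons x u (2:Fin 4) = u (1:Fin 3) := rfl
lemma cw4_3 {α : Type*} (x : α) (u : Fin 3 → α) : Matrix.vecCons x u (3:Fin 4) = u (2:Fin 3) := rfl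
lemma cw5_0 {α : Type*} (x : α) (u : Fin 4 → α) : Matrix.vecCons x u (0:Fin 5) = x := rfl
lemma cw5_1 {α : Type*} (x : α) (u : Fin 4 → α) : Matrix.vecCons x u (1:Fin 5) = u (0:Fin 4) := rfl
lemma cw5_2 {α : Type*} (x : α) (u : Fin 4 → α) : Matrix.vecCons x u (2:Fin 5) = u (1:Fin 4) := rfl
lemma cw5_3 {α : Type*} (x : α) (u : Fin 4 → α) : Matrix.vecCons x u (3:Fin 5) = u (2:Fin 4) := rfl
lemma cw5_4 {α : Type*} (x : α) (u : Fin 4 → α) : Matrix.vecCons x u (4:Fin 5) = u (3:Fin 4) := rfl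
lemma cw6_0 {α : Type*} (x : α) (u : Fin 5 → α) : Matrix.vecCons x u (0:Fin 6) = x := rfl
lemma cw6_1 {α : Type*} (x : α) (u : Fin 5 → α) : Matrix.vecCons x u (1:Fin 6) = u (0:Fin 5) := rfl
lemma cw6_2 {α : Type*} (x : α) (u : Fin 5 → α) : Matrix.vecCons x u (2:Fin 6) = u (1:Fin 5) := rfl
lemma cw6_3 {α : Type*} (x : α) (u : Fin 5 → α) : Matrix.vecCons x u (3:Fin 6) = u (2:Fin 5) := rfl
lemma cw6_4 {α : Type*} (x : α) (u : Fin 5 → α) : Matrix.vecCons x u (4:Fin 6) = u (3:Fin 5) := rfl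
lemma cw6_5 {α : Type*} (x : α) (u : Fin 5 → α) : Matrix.vecCons x u (5:Fin 6) = u (4:Fin 5) := rfl
lemma cw7_0 {α : Type*} (x : α) (u : Fin 6 → α) : Matrix.vecCons x u (0:Fin 7) = x := rfl
lemma cw7_1 {α : Type*} (x : α) (u : Fin 6 → α) : Matrix.vecCons x u (1:Fin 7) = u (0:Fin 6) := rfl
lemma cw7_2 {α : Type*} (x : α) (u : Fin 6 → α) : Matrix.vecCons x u (2:Fin 7) = u (1:Fin 6) := rfl
lemma cw7_3 {α : Type*} (x : α) (u : Fin 6 → α) : Matrix.vecCons x u (3:Fin 7) = u (2:Fin 6) := rfl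
lemma cw7_4 {α : Type*} (x : α) (u : Fin 6 → α) : Matrix.vecCons x u (4:Fin 7) = u (3:Fin 6) := rfl
lemma cw7_5 {α : Type*} (x : α) (u : Fin 6 → α) : Matrix.vecCons x u (5:Fin 7) = u (4:Fin 6) := rfl
lemma cw7_6 {α : Type*} (x : α) (u : Fin 6 → α) : Matrix.vecCons x u (6:Fin 7) = u (5:Fin 6) := rfl
lemma cw8_0 {α : Type*} (x : α) (u : Fin 7 → α) : Matrix.vecCons x u (0:Fin 8) = x := rfl
lemma cw8_1 {α : Type*} (x : α) (u : Fin 7 → α) : Matrix.vecCons x u (1:Fin 8) = u (0:Fin 7) := rfl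
lemma cw8_2 {α : Type*} (x : α) (u : Fin 7 → α) : Matrix.vecCons x u (2:Fin 8) = u (1:Fin 7) := rfl
lemma cw8_3 {α : Type*} (x : α) (u : Fin 7 → α) : Matrix.vecCons x u (3:Fin 8) = u (2:Fin 7) := rfl
lemma cw8_4 {α : Type*} (x : α) (u : Fin 7 → α) : Matrix.vecCons x u (4:Fin 8) = u (3:Fin 7) := rfl
lemma cw8_5 {α : Type*} (x : α) (u : Fin 7 → α) : Matrix.vecCons x u (5:Fin 8) = u (4:Fin 7) := rfl
lemma cw8_6 {α : Type*} (x : α) (u : Fin 7 → α) : Matrix.vecCons x u (6:Fin 8) = u (5:Fin 7) := rfl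
lemma cw8_7 {α : Type*} (x : α) (u : Fin 7 → α) : Matrix.vecCons x u (7:Fin 8) = u (6:Fin 7) := rfl
lemma cw9_0 {α : Type*} (x : α) (u : Fin 8 → α) : Matrix.vecCons x u (0:Fin 9) = x := rfl
lemma cw9_1 {α : Type*} (x : α) (u : Fin 8 → α) : Matrix.vecCons x u (1:Fin 9) = u (0:Fin 8) := rfl
lemma cw9_2 {α : Type*} (x : α) (u : Fin 8 → α) : Matrix.vecCons x u (2:Fin 9) = u (1:Fin 8) := rfl
lemma cw9_3 {α : Type*} (x : α) (u : Fin 8 → α) : Matrix.vecCons x u (3:Fin 9) = u (2:Fin 8) := rfl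
lemma cw9_4 {α : Type*} (x : α) (u : Fin 8 → α) : Matrix.vecCons x u (4:Fin 9) = u (3:Fin 8) := rfl
lemma cw9_5 {α : Type*} (x : α) (u : Fin 8 → α) : Matrix.vecCons x u (5:Fin 9) = u (4:Fin 8) := rfl
lemma cw9_6 {α : Type*} (x : α) (u : Fin 8 → α) : Matrix.vecCons x u (6:Fin 9) = u (5:Fin 8) := rfl
lemma cw9_7 {α : Type*} (x : α) (u : Fin 8 → α) : Matrix.vecCons x u (7:Fin 9) = u (6:Fin 8) := rfl
lemma cw9_8 {α : Type*} (x : α) (u : Fin 8 → α) : Matrix.vecCons x u (8:Fin 9) = u (7:Fin 8) := rfl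

set_option maxHeartbeats 1000000 in
theorem stmt10 (b θ : ℝ) (hb : 0 < b) (hθ : ∀ n : ℤ, θ ≠ n * Real.pi / 3) :
    (rho b θ).rank = 5 := by
  classical
  have hbC : (b:ℂ) ≠ 0 := Complex.ofReal_ne_zero.mpr hb.ne'
  have hEF : Complex.exp (θ * Complex.I) * Complex.exp (-(θ * Complex.I)) = 1 := by
    rw [← Complex.exp_add, add_neg_cancel, Complex.exp_zero]
  have hFne : Complex.exp (-((θ:ℂ) * Complex.I)) ≠ 0 := Complex.exp_ne_zero _
  have hEne : Complex.exp ((θ:ℂ) * Complex.I) ≠ 0 := Complex.exp_ne_zero _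
  have hp1 : 1 < pTheta θ := one_lt_pTheta θ hθ
  have hpne : ((pTheta θ : ℝ):ℂ)^2 - 1 ≠ 0 := by
    have h1 : (pTheta θ)^2 - 1 ≠ 0 := by nlinarith
    intro h
    apply h1
    exact_mod_cast h
  have hpne0 : ((pTheta θ : ℝ):ℂ) ≠ 0 := by
    have : (pTheta θ : ℝ) ≠ 0 := by linarith
    exact_mod_cast this
  have hc : ((pTheta θ : ℝ):ℂ)^3 - 3*((pTheta θ:ℝ):ℂ) = 2*((Real.cos (3*θ) : ℝ):ℂ) := by
    have h2 := congrArg (Complex.ofReal) (pTheta_cube θ)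
    push_cast at h2
    push_cast
    linear_combination h2
  have hE3 : Complex.exp (θ*Complex.I)^3 + Complex.exp (-(θ*Complex.I))^3
      = 2*((Real.cos (3*θ) : ℝ):ℂ) := by
    rw [← Complex.exp_nat_mul, ← Complex.exp_nat_mul]
    have e1 : ((3:ℕ):ℂ) * ((θ:ℂ)*Complex.I) = ((3*θ:ℝ):ℂ) * Complex.I := by push_cast; ring
    have e2 : ((3:ℕ):ℂ) * (-((θ:ℂ)*Complex.I)) = ((-(3*θ):ℝ):ℂ) * Complex.I := by push_cast; ring
    rw [e1, e2, Complex.exp_mul_I, Complex.exp_mul_I]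
    push_cast
    rw [Complex.cos_neg, Complex.sin_neg]
    ring
  have hdet : (!![((pTheta θ : ℝ):ℂ), -Complex.exp (θ*Complex.I), -Complex.exp (-(θ*Complex.I));
       -Complex.exp (-(θ*Complex.I)), ((pTheta θ : ℝ):ℂ), -Complex.exp (θ*Complex.I);
       -Complex.exp (θ*Complex.I), -Complex.exp (-(θ*Complex.I)), ((pTheta θ : ℝ):ℂ)] :
       Matrix (Fin 3) (Fin 3) ℂ).det = 0 := by
    simp [Matrix.det_fin_three]
    linear_combination hc - hE3 + (-3*((pTheta θ : ℝ):ℂ))*hEF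
  obtain ⟨u, hune, huv⟩ := Matrix.exists_mulVec_eq_zero_iff.mpr hdet
  have hu0 := congrFun huv 0
  have hu1 := congrFun huv 1
  have hu2 := congrFun huv 2
  simp [Matrix.mulVec, dotProduct, Fin.sum_univ_three,
    cw2_0, cw2_1, cw3_0, cw3_1, cw3_2, cw4_0, cw4_1, cw4_2, cw4_3, cw5_0, cw5_1, cw5_2, cw5_3, cw5_4, cw6_0, cw6_1, cw6_2, cw6_3, cw6_4, cw6_5, cw7_0, cw7_1, cw7_2, cw7_3, cw7_4, cw7_5, cw7_6, cw8_0, cw8_1, cw8_2, cw8_3, cw8_4, cw8_5, cw8_6, cw8_7, cw9_0, cw9_1, cw9_2, cw9_3, cw9_4, cw9_5, cw9_6, cw9_7, cw9_8, Matrix.vecHead, Matrix.vecTail] at hu0 hu1 hu2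
  have hne_u : ∃ j : Fin 3, u j ≠ 0 := by
    by_contra hcontra
    push_neg at hcontra
    exact hune (funext fun j => hcontra j)
  have hinv : (b:ℂ) * (b:ℂ)⁻¹ = 1 := mul_inv_cancel₀ hbC
  set w : Fin 9 → ℂ := ![u 0, 0, 0, 0, u 1, 0, 0, 0, u 2] with hwdef
  set v1 : Fin 9 → ℂ := ![0, (b:ℂ) * Complex.exp (-(θ*Complex.I)), 0, 1, 0, 0, 0, 0, 0] with hv1def
  set v2 : Fin 9 → ℂ := ![0, 0, Complex.exp (θ*Complex.I), 0, 0, 0, (b:ℂ), 0, 0] with hv2def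
  set v3 : Fin 9 → ℂ := ![0, 0, 0, 0, 0, (b:ℂ) * Complex.exp (-(θ*Complex.I)), 0, 1, 0] with hv3def
  have hw : (rho b θ) *ᵥ w = 0 := by
    funext j
    fin_cases j <;>
      simp [rho, hwdef, Matrix.mulVec, dotProduct, Fin.sum_univ_succ,
        cw2_0, cw2_1, cw3_0, cw3_1, cw3_2, cw4_0, cw4_1, cw4_2, cw4_3, cw5_0, cw5_1, cw5_2, cw5_3, cw5_4, cw6_0, cw6_1, cw6_2, cw6_3, cw6_4, cw6_5, cw7_0, cw7_1, cw7_2, cw7_3, cw7_4, cw7_5, cw7_6, cw8_0, cw8_1, cw8_2, cw8_3, cw8_4, cw8_5, cw8_6, cw8_7, cw9_0, cw9_1, cw9_2, cw9_3, cw9_4, cw9_5, cw9_6, cw9_7, cw9_8, Matrix.vecHead, Matrix.vecTail] <;>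
      first
        | linear_combination hu0
        | linear_combination hu1
        | linear_combination hu2
        | linear_combination (-(b:ℂ))*hEF
        | linear_combination -hEF + hinv
        | linear_combination Complex.exp (-((θ:ℂ)*Complex.I)) * hinv
        | ring
  have hv1k : (rho b θ) *ᵥ v1 = 0 := by
    funext j
    fin_cases j <;>
      simp [rho, hv1def, Matrix.mulVec, dotProduct, Fin.sum_univ_succ,
        cw2_0, cw2_1, cw3_0, cw3_1, cw3_2, cw4_0, cw4_1, cw4_2, cw4_3, cw5_0, cw5_1, cw5_2, cw5_3, cw5_4, cw6_0, cw6_1, cw6_2, cw6_3, cw6_4, cw6_5, cw7_0, cw7_1, cw7_2, cw7_3, cw7_4, cw7_5, cw7_6, cw8_0, cw8_1, cw8_2, cw8_3, cw8_4, cw8_5, cw8_6, cw8_7, cw9_0, cw9_1, cw9_2, cw9_3, cw9_4, cw9_5, cw9_6, cw9_7, cw9_8, Matrix.vecHead, Matrix.vecTail] <;>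
      first
        | linear_combination hu0
        | linear_combination hu1
        | linear_combination hu2
        | linear_combination (-(b:ℂ))*hEF
        | linear_combination -hEF + hinv
        | linear_combination Complex.exp (-((θ:ℂ)*Complex.I)) * hinv
        | ring
  have hv2k : (rho b θ) *ᵥ v2 = 0 := by
    funext j
    fin_cases j <;>
      simp [rho, hv2def, Matrix.mulVec, dotProduct, Fin.sum_univ_succ,
        cw2_0, cw2_1, cw3_0, cw3_1, cw3_2, cw4_0, cw4_1, cw4_2, cw4_3, cw5_0, cw5_1, cw5_2, cw5_3, cw5_4, cw6_0, cw6_1, cw6_2, cw6_3, cw6_4, cw6_5, cw7_0, cw7_1, cw7_2, cw7_3, cw7_4, cw7_5, cw7_6, cw8_0, cw8_1, cw8_2, cw8_3, cw8_4, cw8_5, cw8_6, cw8_7, cw9_0, cw9_1, cw9_2, cw9_3, cw9_4, cw9_5, cw9_6, cw9_7, cw9_8, Matrix.vecHead, Matrix.vecTail] <;>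
      first
        | linear_combination hu0
        | linear_combination hu1
        | linear_combination hu2
        | linear_combination (-(b:ℂ))*hEF
        | linear_combination -hEF + hinv
        | linear_combination Complex.exp (-((θ:ℂ)*Complex.I)) * hinv
        | ring
  have hv3k : (rho b θ) *ᵥ v3 = 0 := by
    funext j
    fin_cases j <;>
      simp [rho, hv3def, Matrix.mulVec, dotProduct, Fin.sum_univ_succ,
        cw2_0, cw2_1, cw3_0, cw3_1, cw3_2, cw4_0, cw4_1, cw4_2, cw4_3, cw5_0, cw5_1, cw5_2, cw5_3, cw5_4, cw6_0, cw6_1, cw6_2, cw6_3, cw6_4, cw6_5, cw7_0, cw7_1, cw7_2, cw7_3, cw7_4, cw7_5, cw7_6, cw8_0, cw8_1, cw8_2, cw8_3, cw8_4, cw8_5, cw8_6, cw8_7, cw9_0, cw9_1, cw9_2, cw9_3, cw9_4, cw9_5, cw9_6, cw9_7, cw9_8, Matrix.vecHead, Matrix.vecTail] <;>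
      first
        | linear_combination hu0
        | linear_combination hu1
        | linear_combination hu2
        | linear_combination (-(b:ℂ))*hEF
        | linear_combination -hEF + hinv
        | linear_combination Complex.exp (-((θ:ℂ)*Complex.I)) * hinv
        | ring
  have hLI4 : LinearIndependent ℂ ![w, v1, v2, v3] := by
    rw [Fintype.linearIndependent_iff]
    intro g hg
    have h3 := congrFun hg 3
    have h6 := congrFun hg 6
    have h7 := congrFun hg 7
    have h0 := congrFun hg 0
    have h4 := congrFun hg 4
    have h8 := congrFun hg 8
    simp [Fin.sum_univ_four, hwdef, hv1def, hv2def, hv3def, hbC,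
      cw2_0, cw2_1, cw3_0, cw3_1, cw3_2, cw4_0, cw4_1, cw4_2, cw4_3, cw5_0, cw5_1, cw5_2, cw5_3, cw5_4, cw6_0, cw6_1, cw6_2, cw6_3, cw6_4, cw6_5, cw7_0, cw7_1, cw7_2, cw7_3, cw7_4, cw7_5, cw7_6, cw8_0, cw8_1, cw8_2, cw8_3, cw8_4, cw8_5, cw8_6, cw8_7, cw9_0, cw9_1, cw9_2, cw9_3, cw9_4, cw9_5, cw9_6, cw9_7, cw9_8, Matrix.vecHead, Matrix.vecTail] at h3 h6 h7 h0 h4 h8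
    have hg0 : g 0 = 0 := by
      obtain ⟨j, hj⟩ := hne_u
      fin_cases j
      · rcases h0 with h | h
        · exact h
        · exact absurd h hj
      · rcases h4 with h | h
        · exact h
        · exact absurd h hj
      · rcases h8 with h | h
        · exact h
        · exact absurd h hj
    intro i
    fin_cases i <;> first | exact hg0 | exact h3 | exact h6 | exact h7 | assumption
  have hmem : ∀ i, ![w, v1, v2, v3] i ∈ LinearMap.ker (rho b θ).mulVecLin := by
    intro i
    fin_cases i
    · exact LinearMap.mem_ker.mpr hw
    · exact LinearMap.mem_ker.mpr hv1k
    · exact LinearMap.mem_ker.mpr hv2k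
    · exact LinearMap.mem_ker.mpr hv3k
  have h4le : 4 ≤ Module.finrank ℂ (LinearMap.ker (rho b θ).mulVecLin) := by
    have hsp : Submodule.span ℂ (Set.range ![w, v1, v2, v3])
        ≤ LinearMap.ker (rho b θ).mulVecLin :=
      Submodule.span_le.mpr (Set.range_subset_iff.mpr hmem)
    have hm := Submodule.finrank_mono hsp
    rw [finrank_span_eq_card hLI4] at hm
    simpa using hm
  have hrank9 : (rho b θ).rank + Module.finrank ℂ (LinearMap.ker (rho b θ).mulVecLin) = 9 := by
    have h := LinearMap.finrank_range_add_finrank_ker (rho b θ).mulVecLin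
    rw [Module.finrank_fintype_fun_eq_card] at h
    simpa [Matrix.rank] using h
  have hLI5 : LinearIndependent ℂ ![rho b θ 0, rho b θ 1, rho b θ 2, rho b θ 4, rho b θ 5] := by
    rw [Fintype.linearIndependent_iff]
    intro g hg
    have h3 := congrFun hg 3
    have h6 := congrFun hg 6
    have h7 := congrFun hg 7
    have h0 := congrFun hg 0
    have h4 := congrFun hg 4
    simp [Fin.sum_univ_five, rho, hEne, hFne,
      cw2_0, cw2_1, cw3_0, cw3_1, cw3_2, cw4_0, cw4_1, cw4_2, cw4_3, cw5_0, cw5_1, cw5_2, cw5_3, cw5_4, cw6_0, cw6_1, cw6_2, cw6_3, cw6_4, cw6_5, cw7_0, cw7_1, cw7_2, cw7_3, cw7_4, cw7_5, cw7_6, cw8_0, cw8_1, cw8_2, cw8_3, cw8_4, cw8_5, cw8_6, cw8_7, cw9_0, cw9_1, cw9_2, cw9_3, cw9_4, cw9_5, cw9_6, cw9_7, cw9_8, Matrix.vecHead, Matrix.vecTail] at h3 h6 h7 h0 h4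
    have hg0m : g 0 * (((pTheta θ:ℝ):ℂ)^2 - 1) = 0 := by
      linear_combination ((pTheta θ:ℝ):ℂ) * h0 + Complex.exp (-((θ:ℂ)*Complex.I)) * h4
        + (g 0) * hEF
    have hg0 : g 0 = 0 := by
      rcases mul_eq_zero.mp hg0m with h | h
      · exact h
      · exact absurd h hpne
    have hg3 : g 3 = 0 := by
      rw [hg0] at h0
      simp [hFne] at h0
      exact h0
    intro i
    fin_cases i <;> first | exact hg0 | exact h3 | exact h6 | exact h7 | exact hg3 | assumption
  have h5le : 5 ≤ (rho b θ).rank := by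
    rw [Matrix.rank_eq_finrank_span_row]
    have hsub : Submodule.span ℂ (Set.range ![rho b θ 0, rho b θ 1, rho b θ 2, rho b θ 4, rho b θ 5])
        ≤ Submodule.span ℂ (Set.range (rho b θ)) := by
      apply Submodule.span_mono
      rw [Set.range_subset_iff]
      intro i
      fin_cases i <;> exact Set.mem_range_self _
    have hm := Submodule.finrank_mono hsub
    rw [finrank_span_eq_card hLI5] at hm
    simp at hm
    exact hm
  omega
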